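/- Let K be an algebraically closed field of characteristic zero, B a finitely generated K-algebra, ∂ a locally nilpotent K-derivation on B, and h ∈ Ker(∂) with h ∈ pl(∂), say h = ∂(f). Then in the localization B_h the element f/h is a slice of the extension of ∂, and consequently B_h ≅ (Ker(∂)_h)[s] is a polynomial ring in one variable over Ker(∂)_h (Slice Theorem applied to B_h). -/

import Mathlib

/-- The kernel of a derivation, as a subalgebra. -/
def Derivation.kerSubalgebra {K B : Type*} [CommRing K] [CommRing B] [Algebra K B]
    (D : Derivation K B B) : Subalgebra K B where
  carrier := {b | D b = 0}
  algebraMap_mem' r := by simp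
  add_mem' {a b} ha hb := by simp_all
  mul_mem' {a b} ha hb := by
    simp only [Set.mem_setOf_eq, Derivation.leibniz, smul_eq_mul] at *
    rw [ha, hb]; ring

section SliceAux

variable {K L : Type*} [Field K] [CharZero K] [CommRing L] [Algebra K L]
  (D : Derivation K L L)

/-- The inverse of `n+1` in the kernel of `D`. -/
noncomputable def natInv (n : ℕ) : ↥(D.kerSubalgebra) :=
  algebraMap K _ (((n : K) + 1)⁻¹)

lemma natInv_spec (n : ℕ) : ((n : ↥(D.kerSubalgebra)) + 1) * natInv D n = 1 := by
  have h1 : ((n : ↥(D.kerSubalgebra)) + 1) = algebraMap K _ ((n : K) + 1) := by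
    push_cast; simp
  have hne : ((n : K) + 1) ≠ 0 := by
    exact_mod_cast (Nat.cast_add_one_ne_zero n (R := K))
  rw [h1, natInv, ← map_mul, mul_inv_cancel₀ hne, map_one]

lemma ker_coeff_eq_zero {n : ℕ} {a : ↥(D.kerSubalgebra)} (hna : ((n : _) + 1) * a = 0) :
    a = 0 := by
  have := congrArg (fun x => natInv D n * x) hna
  simp only [mul_zero] at this
  rw [← mul_assoc, mul_comm (natInv D n), natInv_spec, one_mul] at this
  exact this

/-- The evaluation map `(ker D)[X] → L` sending `X` to `s`. -/
noncomputable def Phi (s : L) : Polynomial ↥(D.kerSubalgebra) →ₐ[K] L :=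
  Polynomial.aevalTower (D.kerSubalgebra).val s

lemma Phi_C (s : L) (a : ↥(D.kerSubalgebra)) : Phi D s (Polynomial.C a) = (a : L) :=
  Polynomial.aevalTower_C _ _ _

lemma Phi_X (s : L) : Phi D s Polynomial.X = s := Polynomial.aevalTower_X _ _

lemma D_Phi (s : L) (hs : D s = 1) (q : Polynomial ↥(D.kerSubalgebra)) :
    D (Phi D s q) = Phi D s (Polynomial.derivative q) := by
  induction q using Polynomial.induction_on with
  | C a => rw [Phi_C, Polynomial.derivative_C, map_zero]; exact a.2
  | add p q hp hq => simp [map_add, hp, hq]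
  | monomial n a _ =>
      have ha : D (a : L) = 0 := a.2
      have e1 : Phi D s (Polynomial.C a * Polynomial.X ^ (n + 1)) = (a : L) * s ^ (n + 1) := by
        rw [map_mul, Phi_C, map_pow, Phi_X]
      have e2 : Polynomial.derivative (Polynomial.C a * Polynomial.X ^ (n + 1))
          = Polynomial.C (a * ((n + 1 : ℕ) : ↥(D.kerSubalgebra))) * Polynomial.X ^ n := by
        rw [Polynomial.derivative_C_mul_X_pow, Nat.add_sub_cancel]
      rw [e1, e2, Derivation.leibniz, Derivation.leibniz_pow, hs, ha,
        map_mul, Phi_C, map_pow, Phi_X]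
      have hc : ((a * ((n + 1 : ℕ) : ↥(D.kerSubalgebra)) : ↥(D.kerSubalgebra)) : L)
          = (a : L) * ((n : L) + 1) := by push_cast; ring
      rw [hc]
      simp only [smul_eq_mul, smul_zero, mul_zero, add_zero, Nat.add_sub_cancel,
        nsmul_eq_mul, mul_one]
      push_cast
      ring

lemma exists_antideriv (p : Polynomial ↥(D.kerSubalgebra)) :
    ∃ q : Polynomial ↥(D.kerSubalgebra), Polynomial.derivative q = p := by
  refine ⟨p.sum fun n a => Polynomial.C (natInv D n * a) * Polynomial.X ^ (n + 1), ?_⟩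
  rw [Polynomial.sum, map_sum]
  conv_rhs => rw [← Polynomial.sum_C_mul_X_pow_eq p]
  rw [Polynomial.sum]
  refine Finset.sum_congr rfl fun n _ => ?_
  have hcast : ((n + 1 : ℕ) : ↥(D.kerSubalgebra)) = (n : ↥(D.kerSubalgebra)) + 1 := by
    push_cast; ring
  have hcoef : natInv D n * p.coeff n * ((n + 1 : ℕ) : ↥(D.kerSubalgebra)) = p.coeff n := by
    rw [hcast]
    calc natInv D n * p.coeff n * ((n : ↥(D.kerSubalgebra)) + 1)
        = ((n : ↥(D.kerSubalgebra)) + 1) * natInv D n * p.coeff n := by ring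
      _ = p.coeff n := by rw [natInv_spec, one_mul]
  rw [Polynomial.derivative_C_mul_X_pow, Nat.add_sub_cancel, hcoef]

lemma eq_C_of_derivative_eq_zero {q : Polynomial ↥(D.kerSubalgebra)}
    (hq : Polynomial.derivative q = 0) : q = Polynomial.C (q.coeff 0) := by
  ext n
  cases n with
  | zero => simp
  | succ n =>
      have h0 : (Polynomial.derivative q).coeff n = 0 := by rw [hq]; simp
      rw [Polynomial.coeff_derivative] at h0
      have : ((n : ↥(D.kerSubalgebra)) + 1) * q.coeff (n + 1) = 0 := by
        rw [mul_comm]; exact_mod_cast h0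
      rw [ker_coeff_eq_zero D this]
      simp

lemma Phi_injective (s : L) (hs : D s = 1) : Function.Injective (Phi D s) := by
  rw [injective_iff_map_eq_zero]
  have key : ∀ n : ℕ, ∀ q : Polynomial ↥(D.kerSubalgebra),
      q.natDegree ≤ n → Phi D s q = 0 → q = 0 := by
    intro n
    induction n with
    | zero =>
        intro q hdeg hq
        rw [Polynomial.eq_C_of_natDegree_le_zero hdeg] at hq ⊢
        rw [Phi_C] at hq
        have : q.coeff 0 = 0 := Subtype.ext hq
        rw [this, map_zero]
    | succ n ih =>
        intro q hdeg hq
        have hd : Phi D s (Polynomial.derivative q) = 0 := by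
          rw [← D_Phi D s hs, hq, map_zero]
        have hdeg' : (Polynomial.derivative q).natDegree ≤ n :=
          (Polynomial.natDegree_derivative_le q).trans (by omega)
        have hder0 : Polynomial.derivative q = 0 := ih _ hdeg' hd
        rw [eq_C_of_derivative_eq_zero D hder0] at hq ⊢
        rw [Phi_C] at hq
        have : q.coeff 0 = 0 := Subtype.ext hq
        rw [this, map_zero]
  intro q hq
  exact key q.natDegree q le_rfl hq

lemma iterate_mul_const (c : L) (hc : D c = 0) : ∀ (n : ℕ) (x : L),
    (⇑D)^[n] (x * c) = (⇑D)^[n] x * c := by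
  intro n
  induction n with
  | zero => intro x; simp
  | succ n ih =>
      intro x
      rw [Function.iterate_succ_apply', Function.iterate_succ_apply', ih,
        Derivation.leibniz, hc]
      simp [mul_comm]

lemma Phi_surjective (s : L) (hs : D s = 1) (hLN : ∀ x : L, ∃ n : ℕ, (⇑D)^[n] x = 0) :
    Function.Surjective (Phi D s) := by
  have key : ∀ n : ℕ, ∀ x : L, (⇑D)^[n] x = 0 → ∃ p, Phi D s p = x := by
    intro n
    induction n with
    | zero => intro x hx; simp only [Function.iterate_zero, id] at hx; exact ⟨0, by rw [map_zero, hx]⟩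
    | succ n ih =>
        intro x hx
        have hDx : (⇑D)^[n] (D x) = 0 := by
          rw [← Function.iterate_succ_apply]; exact hx
        obtain ⟨p, hp⟩ := ih (D x) hDx
        obtain ⟨q, hq⟩ := exists_antideriv D p
        have hmem : x - Phi D s q ∈ D.kerSubalgebra := by
          show D (x - Phi D s q) = 0
          rw [map_sub, D_Phi D s hs, hq, hp, sub_self]
        refine ⟨q + Polynomial.C ⟨x - Phi D s q, hmem⟩, ?_⟩
        rw [map_add, Phi_C]
        show Phi D s q + (x - Phi D s q) = x
        ring
  intro x
  obtain ⟨n, hn⟩ := hLN x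
  exact key n x hn

end SliceAux

/-- Let `B` be a finitely generated algebra over an algebraically closed field
`K` of characteristic zero, `d` a locally nilpotent derivation, and `h = d f ∈ pl(d)` with
`d h = 0`.  Then in `B_h` the element `f/h` is a slice of the extension `D` of `d`, and
`B_h` is a polynomial ring in this slice over the kernel of `D` (Slice Theorem). -/
theorem slice_on_principal_localization {K B : Type*} [Field K] [CharZero K] [IsAlgClosed K]
    [CommRing B] [Algebra K B] [Algebra.FiniteType K B]
    (d : Derivation K B B) (hLN : ∀ b : B, ∃ n : ℕ, (⇑d)^[n] b = 0)
    (h f : B) (hker : d h = 0) (hf : d f = h)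
    (D : Derivation K (Localization.Away h) (Localization.Away h))
    (hext : ∀ b : B, D (algebraMap B (Localization.Away h) b) =
      algebraMap B (Localization.Away h) (d b)) :
    D (algebraMap B (Localization.Away h) f * Localization.Away.invSelf h) = 1 ∧
    ∃ e : Localization.Away h ≃ₐ[K] Polynomial ↥(D.kerSubalgebra),
      e (algebraMap B (Localization.Away h) f * Localization.Away.invSelf h) =
        Polynomial.X := by
  set L := Localization.Away h
  set ι := algebraMap B L
  set inv := Localization.Away.invSelf h with hinv_def
  -- ι h * inv = 1
  have hmul : ι h * inv = 1 := by
    rw [hinv_def, Localization.Away.invSelf, ← Localization.mk_one_eq_algebraMap,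
      Localization.mk_mul, mul_one, one_mul]
    exact Localization.mk_self ⟨h, Submonoid.mem_powers h⟩
  -- D (ι h) = 0
  have hDh : D (ι h) = 0 := by rw [hext, hker]; exact map_zero ι
  -- D inv = 0
  have hDinv : D inv = 0 := by
    have h1 : ι h * D inv = 0 := by
      have h2 := D.leibniz (ι h) inv
      rw [hmul, D.map_one_eq_zero, hDh, smul_zero, add_zero, smul_eq_mul] at h2
      exact h2.symm
    calc D inv = (inv * ι h) * D inv := by rw [mul_comm inv, hmul, one_mul]
      _ = inv * (ι h * D inv) := by ring
      _ = 0 := by rw [h1, mul_zero]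
  -- the slice
  set s : L := ι f * inv with hs_def
  have hs : D s = 1 := by
    rw [hs_def, Derivation.leibniz, hDinv, hext, hf]
    simp only [smul_eq_mul, mul_zero, zero_add, smul_zero]
    rw [mul_comm]
    simpa using hmul
  refine ⟨hs, ?_⟩
  -- local nilpotence of D
  have hLND : ∀ x : L, ∃ n : ℕ, (⇑D)^[n] x = 0 := by
    intro x
    obtain ⟨⟨b, m⟩, hbm⟩ := IsLocalization.mk'_surjective (Submonoid.powers h) x
    obtain ⟨k, hk⟩ := (Submonoid.mem_powers_iff (m : B) h).mp m.2
    obtain ⟨n, hn⟩ := hLN b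
    refine ⟨n, ?_⟩
    have hι : ∀ j : ℕ, (⇑D)^[j] (ι b) = ι ((⇑d)^[j] b) := by
      intro j
      induction j with
      | zero => simp
      | succ j ih =>
          rw [Function.iterate_succ_apply', ih, hext,
            show d ((⇑d)^[j] b) = (⇑d)^[j + 1] b from (Function.iterate_succ_apply' d j b).symm]
    have hDm : D (ι (m : B)) = 0 := by
      rw [← hk]
      have : d (h ^ k) = 0 := by
        rcases k with _ | k
        · simp
        · rw [Derivation.leibniz_pow, hker]; simp
      rw [hext, this, map_zero]
    have hx : x * ι (m : B) = ι b := by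
      rw [← hbm]; exact IsLocalization.mk'_spec L b m
    have h1 : (⇑D)^[n] x * ι (m : B) = 0 := by
      rw [← iterate_mul_const D (ι (m : B)) hDm n x, hx, hι, hn, map_zero]
    have hminv : ι (m : B) * inv ^ k = 1 := by
      rw [← hk, map_pow, ← mul_pow, hmul, one_pow]
    calc (⇑D)^[n] x = (⇑D)^[n] x * (ι (m : B) * inv ^ k) := by rw [hminv, mul_one]
      _ = ((⇑D)^[n] x * ι (m : B)) * inv ^ k := by ring
      _ = 0 := by rw [h1, zero_mul]
  -- the algebra equivalence via the slice theorem
  have hbij : Function.Bijective (Phi D s) :=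
    ⟨Phi_injective D s hs, Phi_surjective D s hs hLND⟩
  let E := AlgEquiv.ofBijective (Phi D s) hbij
  refine ⟨E.symm, ?_⟩
  have hEX : E Polynomial.X = s := Phi_X D s
  show E.symm s = Polynomial.X
  rw [← hEX, AlgEquiv.symm_apply_apply]
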